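/- Let q be an odd prime power and let C be an [n,k] Euclidean self-orthogonal code over F_q with n odd. Then there exists a chain of Euclidean self-orthogonal codes C = C_0 ⊆ C_1 ⊆ ... ⊆ C_r with r = (n-1)/2 - k and dim C_{i+1} = dim C_i + 1; in particular C is contained in a Euclidean self-orthogonal code of dimension (n-1)/2. -/

import Mathlib

open LinearMap Module MvPolynomial
set_option maxHeartbeats 1000000
set_option synthInstance.maxHeartbeats 400000

variable {F : Type} [Field F] {n : ℕ}

noncomputable def dotB (F : Type) [Field F] (n : ℕ) : LinearMap.BilinForm F (Fin n → F) :=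
  LinearMap.mk₂ F (fun x y => ∑ i, x i * y i)
    (fun x x' y => by simp [add_mul, Finset.sum_add_distrib])
    (fun a x y => by simp [Finset.mul_sum, mul_assoc])
    (fun x y y' => by simp [mul_add, Finset.sum_add_distrib])
    (fun a x y => by simp [Finset.mul_sum]; ring_nf; simp [mul_assoc, mul_comm, mul_left_comm])

lemma dotB_apply (x y : Fin n → F) : dotB F n x y = ∑ i, x i * y i := rfl

lemma dotB_comm (x y : Fin n → F) : dotB F n x y = dotB F n y x := by
  simp [dotB_apply, mul_comm]

lemma dotB_refl : (dotB F n).IsRefl := by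
  intro x y h
  simpa [dotB_apply, mul_comm] using h

lemma dotB_nondeg : (dotB F n).Nondegenerate := by
  refine ⟨fun x hx => ?_, fun x hx => ?_⟩
  · funext j
    simpa [dotB_apply, Pi.single_apply] using hx (Pi.single j 1)
  · funext j
    simpa [dotB_apply, Pi.single_apply] using hx (Pi.single j 1)

/-- Key step: expand a self-orthogonal code by one dimension. -/
lemma step_lemma [Fintype F] (C : Submodule F (Fin n → F))
    (hso : ∀ x ∈ C, ∀ y ∈ C, ∑ i, x i * y i = 0)
    (hlt : 2 * Module.finrank F C + 3 ≤ n) :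
    ∃ C' : Submodule F (Fin n → F), C ≤ C' ∧
      Module.finrank F C' = Module.finrank F C + 1 ∧
      (∀ x ∈ C', ∀ y ∈ C', ∑ i, x i * y i = 0) := by
  classical
  set B := dotB F n with hB
  set k := Module.finrank F C with hk
  have hso' : ∀ x ∈ C, ∀ y ∈ C, B x y = 0 := hso
  set W := B.orthogonal C with hW
  have hCW : C ≤ W := fun x hx y hy => hso' y hy x hx
  have hpi : Module.finrank F (Fin n → F) = n := by simp
  have hWrank : Module.finrank F W = n - k := by
    rw [hW, LinearMap.BilinForm.finrank_orthogonal dotB_nondeg, hpi]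
  -- complement of C inside W
  set Cw : Submodule F W := C.comap W.subtype with hCw
  have hCwrank : Module.finrank F Cw = k := by
    rw [hk]
    exact LinearEquiv.finrank_eq (Submodule.comapSubtypeEquivOfLe hCW)
  obtain ⟨U', hU'⟩ := Cw.exists_isCompl
  have hU'rank : Module.finrank F U' = n - 2 * k := by
    have h1 := Submodule.finrank_add_eq_of_isCompl hU'
    rw [hCwrank, hWrank] at h1
    have h2 : Module.finrank F W = n - k := hWrank
    omega
  set U : Submodule F (Fin n → F) := U'.map W.subtype with hU
  have hUW : U ≤ W := Submodule.map_subtype_le W U'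
  have hUrank : Module.finrank F U = n - 2 * k := by
    rw [← hU'rank]
    exact (Submodule.equivSubtypeMap W U').symm.finrank_eq
  set d := Module.finrank F U with hd
  have hd3 : 3 ≤ d := by omega
  set b : Basis (Fin d) F U := Module.finBasis F U with hb
  -- the quadratic form as a polynomial
  set P : MvPolynomial (Fin d) F :=
    ∑ i, ∑ j, MvPolynomial.C (B (b i : Fin n → F) (b j : Fin n → F)) * X i * X j with hP
  have hPdeg : P.totalDegree < d := by
    refine lt_of_le_of_lt ?_ (by omega : 2 < d)
    rw [hP]
    refine (totalDegree_finset_sum _ _).trans (Finset.sup_le fun i _ => ?_)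
    refine (totalDegree_finset_sum _ _).trans (Finset.sup_le fun j _ => ?_)
    calc (MvPolynomial.C (B (b i : Fin n → F) (b j : Fin n → F)) * X i * X j).totalDegree
        ≤ (MvPolynomial.C (B (b i : Fin n → F) (b j : Fin n → F)) * X i).totalDegree
            + (X j : MvPolynomial (Fin d) F).totalDegree := totalDegree_mul _ _
      _ ≤ ((MvPolynomial.C (B (b i : Fin n → F) (b j : Fin n → F))).totalDegree
            + (X i : MvPolynomial (Fin d) F).totalDegree) + _ :=
          Nat.add_le_add_right (totalDegree_mul _ _) _
      _ ≤ 2 := by simp [totalDegree_X, totalDegree_C]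
  have hEval : ∀ c : Fin d → F,
      eval c P = B (∑ i, c i • (b i : Fin n → F)) (∑ j, c j • (b j : Fin n → F)) := by
    intro c
    rw [hP]
    simp only [map_sum, LinearMap.sum_apply, map_smul, LinearMap.smul_apply, smul_eq_mul,
      eval_mul, eval_C, eval_X, Finset.mul_sum]
    exact Finset.sum_congr rfl fun i _ => Finset.sum_congr rfl fun j _ => by rw [hB, dotB_comm]; ring
  -- Chevalley-Warning
  have hcard : Fintype.card F ≠ 0 := Fintype.card_ne_zero
  obtain ⟨p, hp⟩ := CharP.exists F
  haveI : CharP F p := hp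
  have hpprime : p.Prime := CharP.char_is_prime F p
  have hdvd : p ∣ Fintype.card { x : Fin d → F // eval x P = 0 } :=
    char_dvd_card_solutions p (by simpa using hPdeg)
  have hzero : eval (0 : Fin d → F) P = 0 := by
    rw [hP]; simp
  have h1lt : 1 < Fintype.card { x : Fin d → F // eval x P = 0 } := by
    have hpos : 0 < Fintype.card { x : Fin d → F // eval x P = 0 } :=
      Fintype.card_pos_iff.mpr ⟨⟨0, hzero⟩⟩
    rcases hdvd with ⟨m, hm⟩
    have : 2 ≤ p := hpprime.two_le
    nlinarith [Nat.pos_of_ne_zero (fun h => by simp [h, hm] at hpos : m ≠ 0)]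
  obtain ⟨⟨c, hc⟩, hcne⟩ := Fintype.exists_ne_of_one_lt_card h1lt ⟨0, hzero⟩
  have hcne0 : c ≠ 0 := fun h => hcne (by simp [h])
  -- the isotropic vector
  set v : Fin n → F := ∑ i, c i • (b i : Fin n → F) with hv
  have hvU : v ∈ U := by
    exact Submodule.sum_mem _ fun i _ => Submodule.smul_mem _ _ (b i).2
  have hvv : B v v = 0 := by rw [hv, ← hEval]; exact hc
  have hvne : v ≠ 0 := by
    intro h0
    apply hcne0
    have : (∑ i, c i • b i : U) = 0 := by
      apply Subtype.ext
      push_cast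
      simpa [hv] using h0
    have hli := b.linearIndependent
    rw [Fintype.linearIndependent_iff] at hli
    funext i
    exact hli c this i
  have hvW : v ∈ W := hUW hvU
  have hvC : v ∉ C := by
    intro hvc
    have : (⟨v, hvW⟩ : W) ∈ Cw ⊓ U' := by
      constructor
      · exact hvc
      · obtain ⟨u, hu, huv⟩ := hvU
        have : (⟨v, hvW⟩ : W) = u := Subtype.ext (by simp [← huv])
        rw [this]; exact hu
    rw [hU'.inf_eq_bot] at this
    exact hvne (congrArg Subtype.val this)
  refine ⟨C ⊔ F ∙ v, le_sup_left, ?_, ?_⟩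
  · have hinf : C ⊓ (F ∙ v) = ⊥ := by
      rw [eq_bot_iff]
      intro x hx
      rw [Submodule.mem_inf] at hx
      obtain ⟨hxC, hxv⟩ := hx
      rw [Submodule.mem_span_singleton] at hxv
      obtain ⟨a, rfl⟩ := hxv
      rcases eq_or_ne a 0 with rfl | ha
      · simp
      · exact absurd (by simpa [ha] using C.smul_mem a⁻¹ hxC : v ∈ C) hvC
    have := Submodule.finrank_sup_add_finrank_inf_eq C (F ∙ v)
    rw [hinf, finrank_bot, finrank_span_singleton hvne] at this
    omega
  · intro x hx y hy
    rw [Submodule.mem_sup] at hx hy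
    obtain ⟨a, ha, s, hs, rfl⟩ := hx
    obtain ⟨a', ha', s', hs', rfl⟩ := hy
    rw [Submodule.mem_span_singleton] at hs hs'
    obtain ⟨cx, rfl⟩ := hs
    obtain ⟨cy, rfl⟩ := hs'
    have key : B (a + cx • v) (a' + cy • v) = 0 := by
      have hav : B a v = 0 := hvW a ha
      have ha'v : B a' v = 0 := hvW a' ha'
      have hva' : B v a' = 0 := dotB_refl a' v ha'v
      simp [map_add, map_smul, LinearMap.add_apply, LinearMap.smul_apply, smul_eq_mul,
        hso' a ha a' ha', hav, hva', hvv]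
    exact key
theorem so_dim (F : Type) [Field F] [Fintype F] {n : ℕ} (C : Submodule F (Fin n → F))
    (hso : ∀ x ∈ C, ∀ y ∈ C, ∑ i, x i * y i = 0) :
    2 * Module.finrank F C ≤ n := by
  have hso' : ∀ x ∈ C, ∀ y ∈ C, dotB F n x y = 0 := hso
  have hCW : C ≤ (dotB F n).orthogonal C := fun x hx y hy => hso' y hy x hx
  have h1 : Module.finrank F C ≤ Module.finrank F ((dotB F n).orthogonal C) :=
    Submodule.finrank_mono hCW
  have h2 : Module.finrank F ((dotB F n).orthogonal C)
      = Module.finrank F (Fin n → F) - Module.finrank F C :=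
    LinearMap.BilinForm.finrank_orthogonal dotB_nondeg C
  have h3 : Module.finrank F C ≤ Module.finrank F (Fin n → F) := Submodule.finrank_le C
  have hpi : Module.finrank F (Fin n → F) = n := by simp
  omega

/-- over F_q with q odd, an [n,k] Euclidean self-orthogonal code with n
odd lies at the bottom of a chain of Euclidean self-orthogonal codes of length
r = (n-1)/2 - k with dimensions increasing by one; in particular C is contained in a
Euclidean self-orthogonal code of dimension (n-1)/2. -/
theorem stmt11 (F : Type) [Field F] [Fintype F] (hq : Odd (Fintype.card F))
    (n k : ℕ) (hn : Odd n)
    (C : Submodule F (Fin n → F)) (hdim : Module.finrank F C = k)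
    (hso : ∀ x ∈ C, ∀ y ∈ C, ∑ i, x i * y i = 0) :
    ∃ Cs : ℕ → Submodule F (Fin n → F),
      Cs 0 = C ∧
      (∀ i ≤ (n - 1) / 2 - k, ∀ x ∈ Cs i, ∀ y ∈ Cs i, ∑ j, x j * y j = 0) ∧
      (∀ i < (n - 1) / 2 - k, Cs i ≤ Cs (i + 1) ∧
        Module.finrank F (Cs (i + 1)) = Module.finrank F (Cs i) + 1) ∧
      C ≤ Cs ((n - 1) / 2 - k) ∧
      Module.finrank F (Cs ((n - 1) / 2 - k)) = (n - 1) / 2 := by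
  classical
  obtain ⟨m, hm⟩ := hn
  have hm2 : (n - 1) / 2 = m := by omega
  have h2k : 2 * k ≤ n := hdim ▸ so_dim F C hso
  set r := (n - 1) / 2 - k with hr
  let f : Submodule F (Fin n → F) → Submodule F (Fin n → F) := fun D =>
    if h : (∀ x ∈ D, ∀ y ∈ D, ∑ i, x i * y i = 0) ∧ 2 * Module.finrank F D + 3 ≤ n then
      (step_lemma D h.1 h.2).choose
    else D
  have key : ∀ i, i ≤ r →
      ((∀ x ∈ f^[i] C, ∀ y ∈ f^[i] C, ∑ j, x j * y j = 0) ∧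
        Module.finrank F (f^[i] C) = k + i) ∧ (i ≠ 0 → f^[i-1] C ≤ f^[i] C) := by
    intro i
    induction i with
    | zero => intro _; exact ⟨⟨by simpa using hso, by exact hdim⟩, by simp⟩
    | succ i ih =>
      intro h
      obtain ⟨⟨hso_i, hrk_i⟩, _⟩ := ih (by omega)
      have hcond : (∀ x ∈ f^[i] C, ∀ y ∈ f^[i] C, ∑ j, x j * y j = 0) ∧
          2 * Module.finrank F (f^[i] C) + 3 ≤ n := ⟨hso_i, by omega⟩
      have hstep : f^[i+1] C = (step_lemma (f^[i] C) hcond.1 hcond.2).choose := by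
        rw [Function.iterate_succ_apply', show f (f^[i] C) = _ from dif_pos hcond]
      obtain ⟨hle, hrk, hso'⟩ := (step_lemma (f^[i] C) hcond.1 hcond.2).choose_spec
      rw [hstep]
      exact ⟨⟨hso', by omega⟩, fun _ => by simpa using hle⟩
  have chainC : ∀ i, i ≤ r → C ≤ f^[i] C := by
    intro i
    induction i with
    | zero => intro _; simp
    | succ i ih =>
      intro h
      exact le_trans (ih (by omega)) (by simpa using (key (i+1) h).2 (by omega))
  refine ⟨fun i => f^[i] C, by simp, fun i hi => ((key i hi).1).1, fun i hi => ?_,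
    chainC r le_rfl, ?_⟩
  · refine ⟨by simpa using (key (i+1) (by omega)).2 (by omega), ?_⟩
    rw [((key (i+1) (by omega)).1).2, ((key i (by omega)).1).2]; omega
  · rw [((key r le_rfl).1).2]
    omega
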